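/- Let α ∈ (0,1), β = √(1−α²), d > 0, and k > (8α+2β)/(9(αβ)^{3/2}). Then R(k·√(β/α)) > 0, where R(s) = √(s²+k²)·tanh(d√(s²+k²)) + α s^{3/2} − β k²/√s. -/

import Mathlib

theorem stmt_3 (k d α : ℝ) (hd : 0 < d) (hα0 : 0 < α) (hα1 : α < 1)
    (β : ℝ) (hβ : β = Real.sqrt (1 - α ^ 2))
    (hk : k > (8 * α + 2 * β) / (9 * (α * β) ^ ((3 : ℝ) / 2))) :
    0 < Real.sqrt ((k * Real.sqrt (β / α)) ^ 2 + k ^ 2)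
          * Real.tanh (d * Real.sqrt ((k * Real.sqrt (β / α)) ^ 2 + k ^ 2))
        + α * (k * Real.sqrt (β / α)) ^ ((3 : ℝ) / 2)
        - β * k ^ 2 / Real.sqrt (k * Real.sqrt (β / α)) := by
  have hβ0 : 0 < β := by
    rw [hβ]; apply Real.sqrt_pos.mpr; nlinarith
  have hk0 : 0 < k := by
    refine lt_trans ?_ hk
    apply div_pos (by linarith)
    positivity
  set s : ℝ := k * Real.sqrt (β / α) with hs
  have hs0 : 0 < s := by
    apply mul_pos hk0
    apply Real.sqrt_pos.mpr
    positivity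
  have hsq : s ^ 2 = k ^ 2 * (β / α) := by
    rw [hs, mul_pow, Real.sq_sqrt (by positivity : (0:ℝ) ≤ β / α)]
  have hpow : s ^ ((3:ℝ)/2) * s ^ ((1:ℝ)/2) = s ^ 2 := by
    rw [← Real.rpow_add hs0, ← Real.rpow_natCast s 2]
    norm_num
  have hcancel : β * k ^ 2 / Real.sqrt s = α * s ^ ((3:ℝ)/2) := by
    rw [Real.sqrt_eq_rpow, div_eq_iff (by positivity : s ^ ((1:ℝ)/2) ≠ 0)]
    rw [mul_assoc, hpow, hsq]
    field_simp
  rw [hcancel]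
  have hA : 0 < Real.sqrt (s ^ 2 + k ^ 2) := by
    apply Real.sqrt_pos.mpr; positivity
  have htanh : 0 < Real.tanh (d * Real.sqrt (s ^ 2 + k ^ 2)) := by
    rw [Real.tanh_eq_sinh_div_cosh]
    exact div_pos (by positivity) (Real.cosh_pos _)
  have := mul_pos hA htanh
  linarith
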